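/- Let V be an n-dimensional complex vector space and K ⊆ ∧²V a subspace of dimension 2n−3. Then for every 0 ≤ q ≤ n−4 the Koszul module component W_q(V,K) = Coker(∧³V ⊗ Sym^{q−1}V → (∧²V/K) ⊗ Sym^q V) is nonzero. -/

import Mathlib

noncomputable section

set_option synthInstance.maxHeartbeats 1000000
set_option maxHeartbeats 2000000

/-- `V`: an `n`-dimensional complex vector space. -/
abbrev Vv (n : ℕ) : Type := Fin n → ℂ

/-- Monomials of degree `q` in `n` variables: the standard basis of `Sym^q V`. -/
abbrev Mon (n q : ℕ) : Type := {d : Fin n →₀ ℕ // (d.sum fun _ e => e) = q}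

/-- A concrete model of `Sym^q V`, the degree-`q` graded piece of the symmetric algebra
`S = Sym V`:  coordinates with respect to the monomial basis. -/
abbrev SymV (n q : ℕ) : Type := Mon n q → ℂ

lemma mon_sub_deg {n q : ℕ} (i : Fin n) (d : Mon n (q + 1)) (h : d.1 i ≠ 0) :
    ((d.1 - Finsupp.single i 1).sum fun _ e => e) = q := by
  have hle : Finsupp.single i 1 ≤ d.1 := by
    rw [Finsupp.single_le_iff]
    omega
  have hadd : (d.1 - Finsupp.single i 1) + Finsupp.single i 1 = d.1 :=
    tsub_add_cancel_of_le hle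
  have hsum := Finsupp.sum_add_index' (f := d.1 - Finsupp.single i 1)
    (g := Finsupp.single i 1) (h := fun _ (e : ℕ) => e) (fun _ => rfl) (fun _ _ _ => rfl)
  rw [hadd, Finsupp.sum_single_index rfl] at hsum
  have := d.2
  omega

/-- Multiplication by the variable `X i`, as a linear map `Sym^q V → Sym^{q+1} V`. -/
def mulX (n q : ℕ) (i : Fin n) : SymV n q →ₗ[ℂ] SymV n (q + 1) where
  toFun f := fun d => if h : d.1 i ≠ 0 then f ⟨d.1 - Finsupp.single i 1, mon_sub_deg i d h⟩ else 0
  map_add' f g := by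
    funext d
    by_cases h : d.1 i = 0 <;> simp [h]
  map_smul' c f := by
    funext d
    by_cases h : d.1 i = 0 <;> simp [h]

/-- Multiplication `V × Sym^q V → Sym^{q+1} V`, `(v, f) ↦ v·f`, as a bilinear map. -/
def mulBil (n q : ℕ) : Vv n →ₗ[ℂ] SymV n q →ₗ[ℂ] SymV n (q + 1) where
  toFun v := ∑ i, v i • mulX n q i
  map_add' v w := by
    simp [add_smul, Finset.sum_add_distrib]
  map_smul' c v := by
    simp [Finset.smul_sum, smul_smul]

/-- The index set for the standard basis `e_i ∧ e_j`, `i < j`, of `⋀²V`. -/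
abbrev PairIdx (n : ℕ) : Type := {p : Fin n × Fin n // p.1 < p.2}

/-- A concrete model of the exterior square `⋀²V` of `V = ℂⁿ`:  coordinates with respect
to the standard basis `e_i ∧ e_j`, `i < j`. -/
abbrev Wedge2 (n : ℕ) : Type := PairIdx n → ℂ

/-- A concrete model of `V ⊗ Sym^q V`. -/
abbrev TV (n q : ℕ) : Type := Fin n → SymV n q

/-- A concrete model of `⋀²V ⊗ Sym^q V`. -/
abbrev TW (n q : ℕ) : Type := PairIdx n → SymV n q

/-- The Koszul differential `δ_{1,q} : V ⊗ Sym^q V → Sym^{q+1} V`, `v ⊗ f ↦ v·f`. -/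
def delta1 (n q : ℕ) : TV n q →ₗ[ℂ] SymV n (q + 1) :=
  LinearMap.lsum ℂ (fun _ : Fin n => SymV n q) ℂ (fun i => mulX n q i)

/-- The coefficient of `e_i ⊗ (-)` in `δ₂(e_{p₁} ∧ e_{p₂} ⊗ (-))`. -/
def coeff2 (n q : ℕ) (i : Fin n) (p : PairIdx n) : SymV n q →ₗ[ℂ] SymV n (q + 1) :=
  if p.1.1 = i then mulX n q p.1.2 else if p.1.2 = i then -(mulX n q p.1.1) else 0

/-- The Koszul differential `δ_{2,q} : ⋀²V ⊗ Sym^q V → V ⊗ Sym^{q+1} V`,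
`u ∧ w ⊗ f ↦ u ⊗ (w·f) - w ⊗ (u·f)`. -/
def delta2 (n q : ℕ) : TW n q →ₗ[ℂ] TV n (q + 1) :=
  LinearMap.pi (fun i =>
    LinearMap.lsum ℂ (fun _ : PairIdx n => SymV n q) ℂ (fun p => coeff2 n q i p))

/-- The subspace of `⋀²V ⊗ Sym^q V` corresponding to `K ⊗ Sym^q V`, for a subspace
`K ⊆ ⋀²V`. -/
def KTen (n q : ℕ) (K : Submodule ℂ (Wedge2 n)) : Submodule ℂ (TW n q) :=
  Submodule.span ℂ {g | ∃ k ∈ K, ∃ f : SymV n q, g = fun p => k p • f}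

/-- The image `δ_{2,q}(K ⊗ Sym^q V)`, viewed as a submodule of `Im δ_{2,q}`. -/
def WqSub (n q : ℕ) (K : Submodule ℂ (Wedge2 n)) :
    Submodule ℂ ↥(LinearMap.range (delta2 n q)) :=
  Submodule.comap (LinearMap.range (delta2 n q)).subtype
    (Submodule.map (delta2 n q) (KTen n q K))

/-- The degree-`q` graded piece `W_q(V,K) = Im(δ_{2,q}) / δ_{2,q}(K ⊗ Sym^q V)` of the
Koszul module `W(V,K)` associated to the pair `(V,K)`. -/
abbrev Wq (n q : ℕ) (K : Submodule ℂ (Wedge2 n)) : Type :=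
  ↥(LinearMap.range (delta2 n q)) ⧸ WqSub n q K

/-- The standard basis vector `e_i` of `V`. -/
def stdBasis (n : ℕ) (i : Fin n) : Vv n := Pi.single i 1

/-- For `a, b ∈ V^∨`, the linear functional on `⋀²V` corresponding to the decomposable
element `a ∧ b ∈ ⋀²(V^∨) ≅ (⋀²V)^∨`. -/
def phiForm (n : ℕ) (a b : Module.Dual ℂ (Vv n)) : Module.Dual ℂ (Wedge2 n) where
  toFun w := ∑ p : PairIdx n,
    w p * (a (stdBasis n p.1.1) * b (stdBasis n p.1.2) -
      a (stdBasis n p.1.2) * b (stdBasis n p.1.1))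
  map_add' w w' := by
    simp [add_mul, Finset.sum_add_distrib]
  map_smul' c w := by
    simp [Finset.mul_sum, mul_assoc]

/-- The resonance variety `R(V,K) ⊆ V^∨` of a pair `(V,K)`:  the set of those `a` for
which there exists `b` with `a ∧ b ∈ K^⊥ ∖ {0}`, together with `0`.  Here
`K^⊥ ⊆ (⋀²V)^∨` is the annihilator of `K`, i.e. the space of forms vanishing
identically on `K`. -/
def Res (n : ℕ) (K : Submodule ℂ (Wedge2 n)) : Set (Module.Dual ℂ (Vv n)) :=
  {a | ∃ b, phiForm n a b ∈ Submodule.dualAnnihilator K ∧ phiForm n a b ≠ 0} ∪ {0}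

/-- Multiplication by `v ∈ V`, as a map `⋀²V ⊗ Sym^q V → ⋀²V ⊗ Sym^{q+1} V`
(identity on the `⋀²V` factor). -/
def mulVW (n q : ℕ) (v : Vv n) : TW n q →ₗ[ℂ] TW n (q + 1) :=
  LinearMap.pi (fun p => (mulBil n q v).comp (LinearMap.proj p))

/-! ### Auxiliary material for the proof -/

section Aux

open Finset

/-- Any exponent in a degree-`q` monomial is at most `q`. -/
lemma mon_apply_le {n q : ℕ} (d : Mon n q) (i : Fin n) : d.1 i ≤ q := by
  classical
  by_cases h : d.1 i = 0
  · omega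
  · have hi : i ∈ d.1.support := Finsupp.mem_support_iff.2 h
    have h2 : d.1 i ≤ ∑ j ∈ d.1.support, d.1 j :=
      Finset.single_le_sum (fun _ _ => Nat.zero_le _) hi
    have h3 := d.2
    rw [Finsupp.sum] at h3
    omega

noncomputable instance monFintype (n q : ℕ) : Fintype (Mon n q) :=
  Fintype.ofInjective
    (fun d : Mon n q => (fun i => (⟨d.1 i, Nat.lt_succ_of_le (mon_apply_le d i)⟩ : Fin (q + 1)) :
      Fin n → Fin (q + 1)))
    (fun a b h => Subtype.ext (Finsupp.ext fun i => congrArg Fin.val (congrFun h i)))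

lemma card_mon (k q : ℕ) : Fintype.card (Mon k q) = (k + q - 1).choose q := by
  classical
  have e : Mon k q ≃ Sym (Fin k) q :=
    ((Equiv.subtypeEquivRight (q := fun P : Fin k →₀ ℕ => P.sum (fun _ => id) = q)
      (fun d => Iff.rfl)).trans (Sym.equivNatSum (Fin k) q).symm)
  rw [Fintype.card_congr e, Sym.card_sym_eq_choose, Fintype.card_fin]

lemma mon_add_deg {n q : ℕ} (j : Fin n) (m : Mon n q) :
    ((m.1 + Finsupp.single j 1).sum fun _ e => e) = q + 1 := by
  have hs := Finsupp.sum_add_index' (f := m.1) (g := Finsupp.single j 1)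
    (h := fun _ (e : ℕ) => e) (fun _ => rfl) (fun _ _ _ => rfl)
  rw [hs, Finsupp.sum_single_index rfl, m.2]

/-- The monomial `x_j · m`. -/
def mAdd {n q : ℕ} (j : Fin n) (m : Mon n q) : Mon n (q + 1) :=
  ⟨m.1 + Finsupp.single j 1, mon_add_deg j m⟩

/-- The basis monomial `m`, as an element of `Sym^q V`. -/
def monUnit {n q : ℕ} (m : Mon n q) : SymV n q := fun d => if d = m then 1 else 0

/-- The basis element `(e_{p.1} ∧ e_{p.2}) ⊗ m` of `⋀²V ⊗ Sym^q V`. -/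
def Eb {n q : ℕ} (p0 : PairIdx n) (m : Mon n q) : TW n q :=
  fun p => if p = p0 then monUnit m else 0

lemma mulX_monUnit {n q : ℕ} (j : Fin n) (m : Mon n q) :
    mulX n q j (monUnit m) = monUnit (mAdd j m) := by
  classical
  funext d
  show (if h : d.1 j ≠ 0 then monUnit m ⟨d.1 - Finsupp.single j 1, mon_sub_deg j d h⟩ else 0) =
    monUnit (mAdd j m) d
  by_cases hd : d = mAdd j m
  · subst hd
    have hj : (mAdd j m).1 j ≠ 0 := by
      simp [mAdd, Finsupp.add_apply, Finsupp.single_eq_same]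
    rw [dif_pos hj]
    have hsub : (⟨(mAdd j m).1 - Finsupp.single j 1, mon_sub_deg j _ hj⟩ : Mon n q) = m := by
      apply Subtype.ext
      show m.1 + Finsupp.single j 1 - Finsupp.single j 1 = m.1
      ext k
      rw [Finsupp.tsub_apply, Finsupp.add_apply]
      omega
    simp [monUnit, hsub]
  · have hrhs : monUnit (mAdd j m) d = 0 := by rw [monUnit, if_neg hd]
    rw [hrhs]
    by_cases h : d.1 j ≠ 0
    · rw [dif_pos h, monUnit, if_neg]
      intro hEq
      apply hd
      have h1 : d.1 - Finsupp.single j 1 = m.1 := congrArg Subtype.val hEq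
      have hle : Finsupp.single j 1 ≤ d.1 := by
        rw [Finsupp.single_le_iff]; omega
      apply Subtype.ext
      show d.1 = m.1 + Finsupp.single j 1
      rw [← h1, tsub_add_cancel_of_le hle]
    · rw [dif_neg h]

lemma delta2_apply' {n q : ℕ} (f : TW n q) (i : Fin n) :
    delta2 n q f i = ∑ p : PairIdx n, coeff2 n q i p (f p) := by
  simp [delta2, LinearMap.lsum_apply, LinearMap.sum_apply, LinearMap.comp_apply,
    LinearMap.proj_apply, LinearMap.pi_apply]

lemma delta2_Eb {n q : ℕ} (p0 : PairIdx n) (m : Mon n q) (i : Fin n) :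
    delta2 n q (Eb p0 m) i =
      (if p0.1.1 = i then monUnit (mAdd p0.1.2 m) else 0)
        - (if p0.1.2 = i then monUnit (mAdd p0.1.1 m) else 0) := by
  classical
  rw [delta2_apply']
  rw [Finset.sum_eq_single p0 (fun p _ hp => by
    rw [Eb, if_neg hp, map_zero]) (fun h => absurd (Finset.mem_univ p0) h)]
  have hEb : Eb p0 m p0 = monUnit m := by rw [Eb, if_pos rfl]
  rw [hEb, coeff2]
  split_ifs with h1 h2 h2
  · exact absurd (h1.trans h2.symm) (ne_of_lt p0.2)
  · rw [mulX_monUnit, sub_zero]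
  · rw [LinearMap.neg_apply, mulX_monUnit, zero_sub]
  · rw [LinearMap.zero_apply, sub_zero]

/-- `m` only involves variables `x_k` with `k ≤ j`. -/
def GoodM (n q : ℕ) (j : Fin n) (m : Mon n q) : Prop := ∀ k : Fin n, m.1 k ≠ 0 → k ≤ j

instance goodDecidable (n q : ℕ) (j : Fin n) : DecidablePred (GoodM n q j) := fun m =>
  inferInstanceAs (Decidable (∀ k : Fin n, m.1 k ≠ 0 → k ≤ j))

/-- The index set of our linearly independent family: triples `(i < j, m)` with all the
variables of `m` of index at most `j`. -/
abbrev IdxT (n q : ℕ) : Type := {x : PairIdx n × Mon n q // GoodM n q x.1.1.2 x.2}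

/-- The linearly independent family `δ₂((e_i ∧ e_j) ⊗ m)` in `V ⊗ Sym^{q+1} V`. -/
def vFam (n q : ℕ) (s : IdxT n q) : TV n (q + 1) := delta2 n q (Eb s.1.1 s.1.2)

lemma ite_monUnit_apply {n k : ℕ} (c : Prop) [Decidable c] (e d : Mon n k) :
    (if c then monUnit e else (0 : SymV n k)) d = if c ∧ d = e then 1 else 0 := by
  by_cases hc : c
  · simp [hc, monUnit]
  · simp [hc]

lemma vFam_apply {n q : ℕ} (s : IdxT n q) (i : Fin n) (d : Mon n (q + 1)) :
    vFam n q s i d =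
      (if s.1.1.1.1 = i ∧ d = mAdd s.1.1.1.2 s.1.2 then (1 : ℂ) else 0)
        - (if s.1.1.1.2 = i ∧ d = mAdd s.1.1.1.1 s.1.2 then (1 : ℂ) else 0) := by
  classical
  have h := congrFun (delta2_Eb s.1.1 s.1.2 i) d
  rw [vFam, h, Pi.sub_apply, ite_monUnit_apply, ite_monUnit_apply]

lemma mAdd_inj {n q : ℕ} {j j' : Fin n} {m m' : Mon n q}
    (hg : GoodM n q j m) (hg' : GoodM n q j' m') (h : mAdd j m = mAdd j' m') :
    j = j' ∧ m = m' := by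
  have h1 : m.1 + Finsupp.single j 1 = m'.1 + Finsupp.single j' 1 := congrArg Subtype.val h
  have hjj : j = j' := by
    by_contra hne
    have e1 := DFunLike.congr_fun h1 j
    have e2 := DFunLike.congr_fun h1 j'
    rw [Finsupp.add_apply, Finsupp.add_apply, Finsupp.single_eq_same,
      Finsupp.single_eq_of_ne' (Ne.symm hne)] at e1
    rw [Finsupp.add_apply, Finsupp.add_apply, Finsupp.single_eq_same,
      Finsupp.single_eq_of_ne' hne] at e2
    have hj1 : j ≤ j' := hg' j (by omega)
    have hj2 : j' ≤ j := hg j' (by omega)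
    exact hne (le_antisymm hj1 hj2)
  subst hjj
  refine ⟨rfl, Subtype.ext ?_⟩
  exact add_right_cancel h1

lemma vFam_indep (n q : ℕ) : LinearIndependent ℂ (vFam n q) := by
  classical
  rw [Fintype.linearIndependent_iff]
  intro g hg
  suffices H : ∀ N : ℕ, ∀ s : IdxT n q, s.1.1.1.1.1 < N → g s = 0 by
    intro s; exact H n s s.1.1.1.1.2
  intro N
  induction N with
  | zero => exact fun s hs => absurd hs (Nat.not_lt_zero _)
  | succ N ih =>
    intro s hs
    rcases Nat.lt_or_ge s.1.1.1.1.1 N with hlt | hge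
    · exact ih s hlt
    -- evaluate the relation at the pivot coordinate of `s`
    have hg2 := congrFun (congrFun hg s.1.1.1.1) (mAdd s.1.1.1.2 s.1.2)
    rw [Finset.sum_apply, Finset.sum_apply] at hg2
    simp only [Pi.smul_apply, smul_eq_mul, Pi.zero_apply] at hg2
    rw [Finset.sum_congr rfl (fun t _ => by rw [vFam_apply t s.1.1.1.1, mul_sub])] at hg2
    rw [Finset.sum_sub_distrib] at hg2
    have hA : (∑ t : IdxT n q, g t *
        (if t.1.1.1.1 = s.1.1.1.1 ∧
          mAdd s.1.1.1.2 s.1.2 = mAdd t.1.1.1.2 t.1.2 then (1 : ℂ) else 0)) = g s := by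
      rw [Finset.sum_congr rfl (fun t _ => show _ = if t = s then g s else 0 by
        by_cases hts : t = s
        · subst hts; rw [if_pos ⟨rfl, rfl⟩, if_pos rfl, mul_one]
        · rw [if_neg, if_neg hts, mul_zero]
          rintro ⟨hi, hm⟩
          obtain ⟨hj, hmm⟩ := mAdd_inj s.2 t.2 hm
          exact hts (Subtype.ext (Prod.ext_iff.mpr
            ⟨Subtype.ext (Prod.ext_iff.mpr ⟨hi, hj.symm⟩), hmm.symm⟩)))]
      simp
    have hB : (∑ t : IdxT n q, g t *
        (if t.1.1.1.2 = s.1.1.1.1 ∧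
          mAdd s.1.1.1.2 s.1.2 = mAdd t.1.1.1.1 t.1.2 then (1 : ℂ) else 0)) = 0 := by
      refine Finset.sum_eq_zero fun t _ => ?_
      by_cases hc : t.1.1.1.2 = s.1.1.1.1 ∧
          mAdd s.1.1.1.2 s.1.2 = mAdd t.1.1.1.1 t.1.2
      · have htlt : t.1.1.1.1 < t.1.1.1.2 := t.1.1.2
        have hti : t.1.1.1.1.1 < N := by
          have h1 : t.1.1.1.1 < s.1.1.1.1 := hc.1 ▸ htlt
          have h2 : t.1.1.1.1.1 < s.1.1.1.1.1 := h1
          omega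
        rw [ih t hti, zero_mul]
      · rw [if_neg hc, mul_zero]
    rw [hA, hB, sub_zero] at hg2
    exact hg2

lemma sum_castLE {n : ℕ} (j : Fin n) (f : Fin n → ℕ) (hf : ∀ k : Fin n, f k ≠ 0 → k ≤ j) :
    ∑ k : Fin (j.1 + 1), f (Fin.castLE j.2 k) = ∑ i : Fin n, f i := by
  classical
  have hmap := Finset.sum_map Finset.univ (Fin.castLEEmb (j.2 : j.1 + 1 ≤ n)) f
  simp only [Fin.coe_castLEEmb] at hmap
  rw [← hmap]
  refine Finset.sum_subset (Finset.subset_univ _) fun i _ hi => ?_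
  by_contra hne
  apply hi
  rw [Finset.mem_map]
  have hij : i ≤ j := hf i hne
  exact ⟨⟨i.1, by omega⟩, Finset.mem_univ _, by ext; rfl⟩

/-- Monomials in the first `j+1` variables. -/
def goodEquiv (n q : ℕ) (j : Fin n) : {m : Mon n q // GoodM n q j m} ≃ Mon (j.1 + 1) q where
  toFun m := ⟨Finsupp.equivFunOnFinite.symm (fun k : Fin (j.1 + 1) => m.1.1 (Fin.castLE j.2 k)),
    by
      rw [Finsupp.sum_fintype _ _ (fun _ => rfl)]
      simp only [Finsupp.coe_equivFunOnFinite_symm]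
      rw [sum_castLE j _ (fun k hk => m.2 k hk)]
      have hm := m.1.2
      rw [Finsupp.sum_fintype _ _ (fun _ => rfl)] at hm
      exact hm⟩
  invFun w := ⟨⟨Finsupp.equivFunOnFinite.symm
      (fun i : Fin n => if h : i.1 < j.1 + 1 then w.1 ⟨i.1, h⟩ else 0),
    by
      rw [Finsupp.sum_fintype _ _ (fun _ => rfl)]
      simp only [Finsupp.coe_equivFunOnFinite_symm]
      have hcast := sum_castLE j
        (fun i : Fin n => if h : i.1 < j.1 + 1 then w.1 ⟨i.1, h⟩ else 0)
        (fun k hk => by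
          by_contra hkj
          exact hk (dif_neg (by simp only [Fin.le_def] at hkj; omega)))
      rw [← hcast]
      have hw := w.2
      rw [Finsupp.sum_fintype _ _ (fun _ => rfl)] at hw
      refine Eq.trans (Finset.sum_congr rfl fun k _ => ?_) hw
      show (if h : (Fin.castLE j.2 k).1 < j.1 + 1 then w.1 ⟨(Fin.castLE j.2 k).1, h⟩ else 0)
        = w.1 k
      rw [dif_pos (show (Fin.castLE j.2 k).1 < j.1 + 1 from k.2)]
      exact congrArg _ (Fin.ext rfl)⟩,
    fun k hk => by
      by_contra hkj
      simp only [Finsupp.coe_equivFunOnFinite_symm] at hk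
      exact hk (dif_neg (by simp only [Fin.le_def] at hkj; omega))⟩
  left_inv m := by
    apply Subtype.ext
    apply Subtype.ext
    ext i
    simp only [Finsupp.coe_equivFunOnFinite_symm]
    by_cases h : i.1 < j.1 + 1
    · rw [dif_pos h]
      congr 1
    · rw [dif_neg h]
      by_contra hne
      have := m.2 i (Ne.symm hne)
      simp only [Fin.le_def] at this
      omega
  right_inv w := by
    apply Subtype.ext
    ext k
    simp only [Finsupp.coe_equivFunOnFinite_symm]
    rw [dif_pos (by exact k.2)]
    congr 1

lemma card_good (n q : ℕ) (j : Fin n) :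
    Fintype.card {m : Mon n q // GoodM n q j m} = (j.1 + q).choose q := by
  rw [Fintype.card_congr (goodEquiv n q j), card_mon]
  congr 1
  omega

/-- Regroup the index set as a disjoint union over the larger index `j`. -/
def idxEquiv (n q : ℕ) :
    IdxT n q ≃ Σ j : Fin n, Fin j.1 × {m : Mon n q // GoodM n q j m} where
  toFun s := ⟨s.1.1.1.2, ⟨s.1.1.1.1.1, s.1.1.2⟩, ⟨s.1.2, s.2⟩⟩
  invFun x := ⟨⟨⟨⟨⟨x.2.1.1, by have h1 : x.2.1.1 < x.1.1 := x.2.1.2; have := x.1.2; omega⟩,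
      x.1⟩, by exact x.2.1.2⟩, x.2.2.1⟩, x.2.2.2⟩
  left_inv s := rfl
  right_inv x := rfl

lemma card_idx (n q : ℕ) :
    Fintype.card (IdxT n q) = ∑ j ∈ Finset.range n, j * (j + q).choose q := by
  rw [Fintype.card_congr (idxEquiv n q), Fintype.card_sigma]
  rw [← Fin.sum_univ_eq_sum_range (fun j => j * (j + q).choose q) n]
  refine Finset.sum_congr rfl fun j _ => ?_
  rw [Fintype.card_prod, Fintype.card_fin, card_good]

lemma sum_hockey (q : ℕ) : ∀ N : ℕ,
    ∑ j ∈ Finset.range N, j * (j + q).choose q = (q + 1) * (N + q).choose (q + 2)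
  | 0 => by simp [Nat.choose_eq_zero_of_lt (by omega : q < q + 2)]
  | (N + 1) => by
    rw [Finset.sum_range_succ, sum_hockey q N]
    have h1 : (N + q).choose (q + 1) * (q + 1) = (N + q).choose q * N := by
      rw [Nat.choose_succ_right_eq]
      congr 1
      omega
    have h2 : (N + 1 + q).choose (q + 2) = (N + q).choose (q + 1) + (N + q).choose (q + 2) := by
      have h3 : N + 1 + q = (N + q) + 1 := by omega
      rw [h3]
      exact Nat.choose_succ_succ (N + q) (q + 1)
    rw [h2, Nat.mul_add]
    have : N * (N + q).choose q = (q + 1) * (N + q).choose (q + 1) := by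
      rw [mul_comm (q + 1), h1, mul_comm]
    omega

lemma keyIneq {n q : ℕ} (hn : 4 ≤ n) (hq : q ≤ n - 4) :
    (2 * n - 3) * ((n - 1 + q).choose q) + 1 ≤ (q + 1) * ((n + q).choose (q + 2)) := by
  obtain ⟨t, rfl⟩ : ∃ t, n = q + 4 + t := ⟨n - 4 - q, by omega⟩
  set D := (2 * q + 3 + t).choose q with hD
  have hD1 : 1 ≤ D := Nat.choose_pos (by omega)
  have hA : (2 * q + 4 + t).choose (q + 2) * (q + 2) =
      (2 * q + 4 + t).choose (q + 1) * (q + 3 + t) := by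
    have := Nat.choose_succ_right_eq (2 * q + 4 + t) (q + 1)
    rw [this]
    congr 1
    omega
  have hB : (2 * q + 3 + t + 1) * (2 * q + 3 + t).choose q =
      (2 * q + 3 + t + 1).choose (q + 1) * (q + 1) :=
    Nat.add_one_mul_choose_eq (2 * q + 3 + t) q
  have hBB : (2 * q + 4 + t) * D = (2 * q + 4 + t).choose (q + 1) * (q + 1) := by
    rw [hD]
    have h4 : 2 * q + 4 + t = 2 * q + 3 + t + 1 := by omega
    rw [h4]
    exact hB
  have hgoal2n3 : 2 * (q + 4 + t) - 3 = 2 * q + 5 + 2 * t := by omega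
  have hgoaln1q : q + 4 + t - 1 + q = 2 * q + 3 + t := by omega
  have hgoalnq : q + 4 + t + q = 2 * q + 4 + t := by omega
  rw [hgoal2n3, hgoaln1q, hgoalnq, ← hD]
  -- multiply through by (q+2)
  have key : (q + 2) * ((2 * q + 5 + 2 * t) * D + 1) ≤
      (q + 2) * ((q + 1) * (2 * q + 4 + t).choose (q + 2)) := by
    have hrhs : (q + 2) * ((q + 1) * (2 * q + 4 + t).choose (q + 2)) =
        (q + 3 + t) * ((2 * q + 4 + t) * D) := by
      calc (q + 2) * ((q + 1) * (2 * q + 4 + t).choose (q + 2))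
          = (q + 1) * ((2 * q + 4 + t).choose (q + 2) * (q + 2)) := by ring
        _ = (q + 1) * ((2 * q + 4 + t).choose (q + 1) * (q + 3 + t)) := by rw [hA]
        _ = (q + 3 + t) * ((2 * q + 4 + t).choose (q + 1) * (q + 1)) := by ring
        _ = (q + 3 + t) * ((2 * q + 4 + t) * D) := by rw [hBB]
    rw [hrhs]
    have expand : (q + 3 + t) * ((2 * q + 4 + t) * D) =
        (q + 2) * (2 * q + 5 + 2 * t) * D + ((q + 2) + t * (q + 3 + t)) * D := by ring
    rw [expand]
    have h5 : (q + 2) * ((2 * q + 5 + 2 * t) * D + 1) =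
        (q + 2) * (2 * q + 5 + 2 * t) * D + (q + 2) := by ring
    rw [h5]
    have h6 : q + 2 ≤ ((q + 2) + t * (q + 3 + t)) * D := by
      calc q + 2 ≤ (q + 2) + t * (q + 3 + t) := by omega
        _ = ((q + 2) + t * (q + 3 + t)) * 1 := by ring
        _ ≤ ((q + 2) + t * (q + 3 + t)) * D := Nat.mul_le_mul_left _ hD1
    omega
  exact Nat.le_of_mul_le_mul_left key (by omega)

end Aux

/-- If `V` is `n`-dimensional and `K ⊆ ⋀²V` has dimension `2n−3`, then
`W_q(V,K) ≠ 0` for every `0 ≤ q ≤ n−4`. -/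
theorem Wq_nontrivial_of_dim_eq (n q : ℕ) (hn : 4 ≤ n) (K : Submodule ℂ (Wedge2 n))
    (hK : Module.finrank ℂ K = 2 * n - 3) (hq : q ≤ n - 4) :
    Nontrivial (Wq n q K) := by
  classical
  -- lower bound on the rank of `δ₂`
  have hspan : Submodule.span ℂ (Set.range (vFam n q)) ≤ LinearMap.range (delta2 n q) := by
    rw [Submodule.span_le]
    rintro _ ⟨s, rfl⟩
    exact ⟨Eb s.1.1 s.1.2, rfl⟩
  have h1 : Fintype.card (IdxT n q) ≤ Module.finrank ℂ (LinearMap.range (delta2 n q)) := by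
    rw [← finrank_span_eq_card (vFam_indep n q)]
    exact Submodule.finrank_mono hspan
  -- upper bound on `δ₂(K ⊗ Sym^q V)`
  let b := Module.finBasisOfFinrankEq ℂ K hK
  let L : (Fin (2 * n - 3) → SymV n q) →ₗ[ℂ] TW n q :=
    LinearMap.lsum ℂ (fun _ => SymV n q) ℂ
      (fun s => LinearMap.pi (fun p => ((b s : Wedge2 n) p) • LinearMap.id))
  have hKT : KTen n q K ≤ LinearMap.range L := by
    rw [KTen, Submodule.span_le]
    rintro g ⟨k, hk, f, rfl⟩
    refine ⟨fun s => (b.repr ⟨k, hk⟩ s : ℂ) • f, ?_⟩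
    have hk2 : ∑ s, ((b.repr ⟨k, hk⟩ s : ℂ) • ((b s : K) : Wedge2 n)) = k := by
      have h := congrArg (K.subtype) (b.sum_repr ⟨k, hk⟩)
      rw [map_sum] at h
      simpa only [map_smul, Submodule.subtype_apply, Submodule.coe_mk] using h
    funext p
    have hLg : L (fun s => (b.repr ⟨k, hk⟩ s : ℂ) • f) p
        = ∑ s, ((b s : Wedge2 n) p) • ((b.repr ⟨k, hk⟩ s : ℂ) • f) := by
      simp only [L, LinearMap.lsum_apply, LinearMap.sum_apply, LinearMap.comp_apply,
        LinearMap.proj_apply, Finset.sum_apply, LinearMap.pi_apply, LinearMap.smul_apply,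
        LinearMap.id_apply]
    rw [hLg]
    funext d
    have hk3 : ∑ s, ((b.repr ⟨k, hk⟩ s : ℂ) * ((b s : K) : Wedge2 n) p) = k p := by
      have h5 := congrFun hk2 p
      simpa [Finset.sum_apply, Pi.smul_apply, smul_eq_mul] using h5
    calc (∑ s, ((b s : Wedge2 n) p) • ((b.repr ⟨k, hk⟩ s : ℂ) • f)) d
        = ∑ s, ((b s : Wedge2 n) p) * ((b.repr ⟨k, hk⟩ s : ℂ) * f d) := by
          simp [Finset.sum_apply]
      _ = (∑ s, ((b.repr ⟨k, hk⟩ s : ℂ) * ((b s : K) : Wedge2 n) p)) * f d := by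
          rw [Finset.sum_mul]
          exact Finset.sum_congr rfl fun s _ => by ring
      _ = k p * f d := by rw [hk3]
      _ = (k p • f) d := rfl
  have h2 : Module.finrank ℂ (Submodule.map (delta2 n q) (KTen n q K)) ≤
      (2 * n - 3) * Fintype.card (Mon n q) := by
    calc Module.finrank ℂ (Submodule.map (delta2 n q) (KTen n q K))
        ≤ Module.finrank ℂ (KTen n q K) := Submodule.finrank_map_le _ _
      _ ≤ Module.finrank ℂ (LinearMap.range L) := Submodule.finrank_mono hKT
      _ ≤ Module.finrank ℂ (Fin (2 * n - 3) → SymV n q) := LinearMap.finrank_range_le L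
      _ = (2 * n - 3) * Fintype.card (Mon n q) := by
          rw [Module.finrank_pi_fintype, Finset.sum_const, Finset.card_univ, Fintype.card_fin,
            smul_eq_mul]
          congr 1
          exact Module.finrank_pi ℂ
  -- the counting inequality
  have hcard : (2 * n - 3) * Fintype.card (Mon n q) + 1 ≤ Fintype.card (IdxT n q) := by
    rw [card_idx, sum_hockey, card_mon]
    have h3 : n + q - 1 = n - 1 + q := by omega
    rw [h3]
    exact keyIneq hn hq
  -- conclude
  have hne : WqSub n q K ≠ ⊤ := by
    intro htop
    rw [WqSub, Submodule.comap_subtype_eq_top] at htop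
    have h4 := Submodule.finrank_mono htop
    omega
  exact Submodule.Quotient.nontrivial_iff.mpr hne
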